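/- Assume ∫₀^∞ 1/w(x) dx < ∞ and set k² = ∫₀^∞ 1/w dx. Then the squaring map g ↦ g² on H_w satisfies ‖g₁² − g₂²‖_w ≤ √(5+4k²) ‖g₁+g₂‖_w ‖g₁−g₂‖_w for all g₁, g₂ ∈ H_w; in particular the squaring map is Lipschitz continuous on bounded subsets of H_w. -/

import Mathlib

open MeasureTheory Set Filter

noncomputable section

/-- Inner product on the Filipović space `H_w`, for functions `g, h` with chosen
(weak) derivatives `g', h'`:  `⟨g,h⟩_w = g(0)h(0) + ∫₀^∞ w g' h'`. -/
def wInner (w g g' h h' : ℝ → ℝ) : ℝ :=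
  g 0 * h 0 + ∫ x in Ioi (0:ℝ), w x * g' x * h' x

/-- Norm on the Filipović space `H_w`. -/
def wNorm (w g g' : ℝ → ℝ) : ℝ := Real.sqrt (wInner w g g' g g')

/-- `w : ℝ≥0 → [1,∞)` continuous, increasing, with `w 0 = 1`. -/
structure IsWeight (w : ℝ → ℝ) : Prop where
  cont : ContinuousOn w (Ici 0)
  mono : MonotoneOn w (Ici 0)
  one_le : ∀ x ∈ Ici (0:ℝ), 1 ≤ w x
  at_zero : w 0 = 1

/-- `g ∈ H_w` with derivative `g'`: `g` is absolutely continuous on `[0,∞)` with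
a.e. derivative `g'`, and `∫₀^∞ w (g')² < ∞`. -/
def MemHw (w g g' : ℝ → ℝ) : Prop :=
  (∀ x ∈ Ici (0:ℝ), g x = g 0 + ∫ t in Ioc (0:ℝ) x, g' t) ∧
  (∀ x ∈ Ici (0:ℝ), IntegrableOn g' (Ioc 0 x)) ∧
  IntegrableOn (fun x => w x * g' x ^ 2) (Ioi 0)

/-- The reproducing kernel `h_x(y) = 1 + ∫₀^{min(x,y)} 1/w(s) ds`. -/
def hker (w : ℝ → ℝ) (x y : ℝ) : ℝ := 1 + ∫ s in Ioc (0:ℝ) (min x y), 1 / w s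

/-- Derivative of `h_x`. -/
def hker' (w : ℝ → ℝ) (x : ℝ) : ℝ → ℝ := (Iic x).indicator (fun s => 1 / w s)

/-- AM–GM optimization: if `a ≤ (t p + q/t)/2` for all `t > 0` then `a ≤ √p √q`. -/
lemma amgm_opt {p q a : ℝ} (hp : 0 ≤ p) (hq : 0 ≤ q)
    (h : ∀ t : ℝ, 0 < t → a ≤ t / 2 * p + 1 / (2 * t) * q) :
    a ≤ Real.sqrt p * Real.sqrt q := by
  rcases hp.eq_or_lt with hp0 | hp0
  · rw [← hp0, Real.sqrt_zero, zero_mul]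
    by_contra hc
    push_neg at hc
    have ht : (0:ℝ) < (q + 1) / a := by positivity
    have h2 := h _ ht
    rw [← hp0] at h2
    have e : 1 / (2 * ((q + 1) / a)) = a / (2 * (q + 1)) := by
      field_simp
    rw [e, mul_zero, zero_add] at h2
    -- a ≤ a / (2*(q+1)) * q
    have hq1 : (0:ℝ) < q + 1 := by linarith
    rw [div_mul_eq_mul_div, le_div_iff₀ (by positivity)] at h2
    nlinarith
  · rcases hq.eq_or_lt with hq0 | hq0
    · rw [← hq0, Real.sqrt_zero, mul_zero]
      by_contra hc
      push_neg at hc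
      have ht : (0:ℝ) < a / p := by positivity
      have h2 := h _ ht
      rw [← hq0, mul_zero, add_zero, div_div, div_mul_eq_mul_div,
        le_div_iff₀ (by positivity)] at h2
      nlinarith
    · have hsp : (0:ℝ) < Real.sqrt p := Real.sqrt_pos.2 hp0
      have hsq : (0:ℝ) < Real.sqrt q := Real.sqrt_pos.2 hq0
      have ep : Real.sqrt p * Real.sqrt p = p := Real.mul_self_sqrt hp
      have eq' : Real.sqrt q * Real.sqrt q = q := Real.mul_self_sqrt hq
      have ht : (0:ℝ) < Real.sqrt q / Real.sqrt p := by positivity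
      have h2 := h _ ht
      have e : Real.sqrt q / Real.sqrt p / 2 * p + 1 / (2 * (Real.sqrt q / Real.sqrt p)) * q
          = Real.sqrt p * Real.sqrt q := by
        field_simp
        nlinarith [ep, eq']
      linarith [h2.trans_eq e]

lemma integral_w_sq_nonneg {w g' : ℝ → ℝ} (hw : IsWeight w) :
    0 ≤ ∫ x in Ioi (0:ℝ), w x * g' x ^ 2 :=
  setIntegral_nonneg measurableSet_Ioi fun s hs =>
    mul_nonneg (by linarith [hw.one_le s (mem_Ici.2 (le_of_lt hs))]) (sq_nonneg _)

lemma wInner_self_eq (w g g' : ℝ → ℝ) :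
    wInner w g g' g g' = g 0 ^ 2 + ∫ x in Ioi (0:ℝ), w x * g' x ^ 2 := by
  unfold wInner
  rw [← sq]
  congr 1
  apply integral_congr_ae
  filter_upwards with x
  ring

lemma wNorm_sq {w : ℝ → ℝ} (hw : IsWeight w) (g g' : ℝ → ℝ) :
    wNorm w g g' ^ 2 = g 0 ^ 2 + ∫ x in Ioi (0:ℝ), w x * g' x ^ 2 := by
  rw [wNorm, wInner_self_eq, Real.sq_sqrt (add_nonneg (sq_nonneg _) (integral_w_sq_nonneg hw))]

/-- Cauchy–Schwarz bound for `∫₀ˣ |g'|`. -/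
lemma cs_bound {w g' : ℝ → ℝ} (hw : IsWeight w)
    (hk : IntegrableOn (fun x => 1 / w x) (Ioi 0))
    (hwg : IntegrableOn (fun x => w x * g' x ^ 2) (Ioi 0))
    {x : ℝ} (hg' : IntegrableOn g' (Ioc 0 x)) :
    ∫ t in Ioc (0:ℝ) x, |g' t| ≤
      Real.sqrt (∫ s in Ioi (0:ℝ), 1 / w s) *
        Real.sqrt (∫ s in Ioi (0:ℝ), w s * g' s ^ 2) := by
  set K := ∫ s in Ioi (0:ℝ), 1 / w s with hKdef
  set C := ∫ s in Ioi (0:ℝ), w s * g' s ^ 2 with hCdef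
  have hK : 0 ≤ K := setIntegral_nonneg measurableSet_Ioi fun s hs =>
    div_nonneg zero_le_one (by linarith [hw.one_le s (mem_Ici.2 (le_of_lt hs))])
  have hC : 0 ≤ C := integral_w_sq_nonneg hw
  apply amgm_opt hK hC
  intro t ht
  have hsub : Ioc (0:ℝ) x ⊆ Ioi 0 := Ioc_subset_Ioi_self
  have hk' : IntegrableOn (fun s => 1 / w s) (Ioc 0 x) := hk.mono_set hsub
  have hwg' : IntegrableOn (fun s => w s * g' s ^ 2) (Ioc 0 x) := hwg.mono_set hsub
  have step1 : ∫ s in Ioc (0:ℝ) x, |g' s| ≤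
      ∫ s in Ioc (0:ℝ) x, (t / 2 * (1 / w s) + 1 / (2 * t) * (w s * g' s ^ 2)) := by
    apply setIntegral_mono_on hg'.abs
      ((hk'.const_mul (t / 2)).add (hwg'.const_mul (1 / (2 * t)))) measurableSet_Ioc
    intro s hs
    have hws : 1 ≤ w s := hw.one_le s (le_of_lt hs.1)
    have hw0 : w s ≠ 0 := by linarith
    have key : 2 * t * |g' s| ≤ t ^ 2 * (1 / w s) + w s * g' s ^ 2 := by
      have h0 : 0 ≤ w s * (t * (1 / w s) - |g' s|) ^ 2 :=
        mul_nonneg (by linarith) (sq_nonneg _)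
      have expand : w s * (t * (1 / w s) - |g' s|) ^ 2
          = t ^ 2 * (1 / w s) - 2 * t * |g' s| + w s * g' s ^ 2 := by
        field_simp
        rw [← sq_abs (g' s)]
        ring
      rw [expand] at h0
      linarith
    have hmul := mul_le_mul_of_nonneg_left key
      (le_of_lt (show (0:ℝ) < 1 / (2 * t) by positivity))
    have hL : 1 / (2 * t) * (2 * t * |g' s|) = |g' s| := by
      field_simp
    have hR : 1 / (2 * t) * (t ^ 2 * (1 / w s) + w s * g' s ^ 2)
        = t / 2 * (1 / w s) + 1 / (2 * t) * (w s * g' s ^ 2) := by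
      field_simp
    rw [hL, hR] at hmul
    exact hmul
  have step2 : ∫ s in Ioc (0:ℝ) x, (t / 2 * (1 / w s) + 1 / (2 * t) * (w s * g' s ^ 2))
      = t / 2 * (∫ s in Ioc (0:ℝ) x, (1 / w s))
        + 1 / (2 * t) * ∫ s in Ioc (0:ℝ) x, (w s * g' s ^ 2) := by
    rw [integral_add (hk'.const_mul _) (hwg'.const_mul _), integral_const_mul,
      integral_const_mul]
  have hK2 : ∫ s in Ioc (0:ℝ) x, (1 / w s) ≤ K := by
    apply setIntegral_mono_set hk
    · filter_upwards [ae_restrict_mem measurableSet_Ioi] with s hs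
      exact div_nonneg zero_le_one (by linarith [hw.one_le s (mem_Ici.2 (le_of_lt hs))])
    · exact HasSubset.Subset.eventuallyLE hsub
  have hC2 : ∫ s in Ioc (0:ℝ) x, (w s * g' s ^ 2) ≤ C := by
    apply setIntegral_mono_set hwg
    · filter_upwards [ae_restrict_mem measurableSet_Ioi] with s hs
      exact mul_nonneg (by linarith [hw.one_le s (mem_Ici.2 (le_of_lt hs))]) (sq_nonneg _)
    · exact HasSubset.Subset.eventuallyLE hsub
  have ht2 : (0:ℝ) ≤ t / 2 := by positivity
  have ht3 : (0:ℝ) ≤ 1 / (2 * t) := by positivity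
  calc ∫ s in Ioc (0:ℝ) x, |g' s| ≤ _ := step1
    _ = _ := step2
    _ ≤ t / 2 * K + 1 / (2 * t) * C :=
        add_le_add (mul_le_mul_of_nonneg_left hK2 ht2) (mul_le_mul_of_nonneg_left hC2 ht3)

/-- Sup-norm bound: `|g x| ≤ √(1+k²) ‖g‖_w` for `x ≥ 0`. -/
lemma sup_bound {w g g' : ℝ → ℝ} (hw : IsWeight w)
    (hk : IntegrableOn (fun x => 1 / w x) (Ioi 0))
    (h : MemHw w g g') {x : ℝ} (hx : 0 ≤ x) :
    |g x| ≤ Real.sqrt (1 + ∫ s in Ioi (0:ℝ), 1 / w s) * wNorm w g g' := by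
  set K := ∫ s in Ioi (0:ℝ), 1 / w s with hKdef
  set C := ∫ s in Ioi (0:ℝ), w s * g' s ^ 2 with hCdef
  have hK : 0 ≤ K := setIntegral_nonneg measurableSet_Ioi fun s hs =>
    div_nonneg zero_le_one (by linarith [hw.one_le s (mem_Ici.2 (le_of_lt hs))])
  have hC : 0 ≤ C := integral_w_sq_nonneg hw
  have hnorm : wNorm w g g' = Real.sqrt (g 0 ^ 2 + C) := by
    rw [wNorm, wInner_self_eq]
  have h1 : |g x| ≤ |g 0| + ∫ t in Ioc (0:ℝ) x, |g' t| := by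
    rw [h.1 x hx]
    refine (abs_add_le _ _).trans ?_
    gcongr
    calc |∫ t in Ioc (0:ℝ) x, g' t| ≤ ∫ t in Ioc (0:ℝ) x, |g' t| := by
          simpa [Real.norm_eq_abs] using
            norm_integral_le_integral_norm (μ := volume.restrict (Ioc 0 x)) g'
      _ ≤ _ := le_refl _
  have h2 := cs_bound hw hk h.2.2 (h.2.1 x hx)
  rw [← hKdef, ← hCdef] at h2
  have h3 : |g x| ≤ |g 0| + Real.sqrt K * Real.sqrt C := by linarith
  have h4 : |g 0| + Real.sqrt K * Real.sqrt C ≤ Real.sqrt ((1 + K) * (g 0 ^ 2 + C)) := by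
    have ha : 0 ≤ |g 0| + Real.sqrt K * Real.sqrt C := by positivity
    rw [← Real.sqrt_sq ha]
    apply Real.sqrt_le_sqrt
    have e1 : Real.sqrt K ^ 2 = K := Real.sq_sqrt hK
    have e2 : Real.sqrt C ^ 2 = C := Real.sq_sqrt hC
    nlinarith [sq_nonneg (Real.sqrt K * |g 0| - Real.sqrt C), sq_abs (g 0),
      abs_nonneg (g 0), Real.sqrt_nonneg K, Real.sqrt_nonneg C]
  calc |g x| ≤ |g 0| + Real.sqrt K * Real.sqrt C := h3
    _ ≤ Real.sqrt ((1 + K) * (g 0 ^ 2 + C)) := h4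
    _ = Real.sqrt (1 + K) * Real.sqrt (g 0 ^ 2 + C) := Real.sqrt_mul (by linarith) _
    _ = Real.sqrt (1 + K) * wNorm w g g' := by rw [hnorm]

lemma aesm_of_locally_integrable {g' : ℝ → ℝ}
    (h : ∀ x ∈ Ici (0:ℝ), IntegrableOn g' (Ioc 0 x)) :
    AEStronglyMeasurable g' (volume.restrict (Ioi 0)) := by
  have e : Ioi (0:ℝ) = ⋃ n : ℕ, Ioc 0 ((n:ℝ) + 1) := by
    ext y
    simp only [mem_Ioi, mem_iUnion, mem_Ioc]
    constructor
    · intro hy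
      obtain ⟨n, hn⟩ := exists_nat_ge y
      exact ⟨n, hy, by linarith⟩
    · rintro ⟨n, hn, -⟩
      exact hn
  rw [e]
  rw [aestronglyMeasurable_iUnion_iff]
  intro n
  exact (h ((n:ℝ) + 1) (mem_Ici.2 (by positivity))).aestronglyMeasurable

lemma MemHw.comb {w g₁ g₁' g₂ g₂' : ℝ → ℝ} (hw : IsWeight w) (c : ℝ)
    (h₁ : MemHw w g₁ g₁') (h₂ : MemHw w g₂ g₂') :
    MemHw w (fun x => g₁ x + c * g₂ x) (fun x => g₁' x + c * g₂' x) := by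
  refine ⟨?_, ?_, ?_⟩
  · intro x hx
    simp only
    rw [integral_add (h₁.2.1 x hx) ((h₂.2.1 x hx).const_mul c), integral_const_mul,
      h₁.1 x hx, h₂.1 x hx]
    ring
  · intro x hx
    exact (h₁.2.1 x hx).add ((h₂.2.1 x hx).const_mul c)
  · have hmw : AEStronglyMeasurable w (volume.restrict (Ioi 0)) :=
      (hw.cont.mono Ioi_subset_Ici_self).aestronglyMeasurable measurableSet_Ioi
    have hm1 : AEStronglyMeasurable g₁' (volume.restrict (Ioi 0)) :=
      aesm_of_locally_integrable h₁.2.1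
    have hm2 : AEStronglyMeasurable g₂' (volume.restrict (Ioi 0)) :=
      aesm_of_locally_integrable h₂.2.1
    have hmf : AEStronglyMeasurable (fun x => w x * (g₁' x + c * g₂' x) ^ 2)
        (volume.restrict (Ioi 0)) :=
      hmw.mul ((hm1.add (hm2.const_mul c)).pow 2)
    have hgint : Integrable
        (fun x => 2 * (w x * g₁' x ^ 2) + (2 * c ^ 2) * (w x * g₂' x ^ 2))
        (volume.restrict (Ioi 0)) :=
      (h₁.2.2.const_mul 2).add (h₂.2.2.const_mul (2 * c ^ 2))
    show Integrable (fun x => w x * (g₁' x + c * g₂' x) ^ 2) (volume.restrict (Ioi 0))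
    refine hgint.mono' hmf ?_
    filter_upwards [ae_restrict_mem measurableSet_Ioi] with s hs
    have hws : 1 ≤ w s := hw.one_le s (mem_Ici.2 (le_of_lt hs))
    have hnn : 0 ≤ w s * (g₁' s + c * g₂' s) ^ 2 := mul_nonneg (by linarith) (sq_nonneg _)
    rw [Real.norm_eq_abs, abs_of_nonneg hnn]
    have hq : (g₁' s + c * g₂' s) ^ 2 ≤ 2 * g₁' s ^ 2 + 2 * (c * g₂' s) ^ 2 := by
      nlinarith [sq_nonneg (g₁' s - c * g₂' s)]
    have := mul_le_mul_of_nonneg_left hq (show (0:ℝ) ≤ w s by linarith)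
    nlinarith [this]

lemma MemHw.add' {w g₁ g₁' g₂ g₂' : ℝ → ℝ} (hw : IsWeight w)
    (h₁ : MemHw w g₁ g₁') (h₂ : MemHw w g₂ g₂') :
    MemHw w (fun x => g₁ x + g₂ x) (fun x => g₁' x + g₂' x) := by
  have h := MemHw.comb hw 1 h₁ h₂
  simpa using h

lemma MemHw.sub' {w g₁ g₁' g₂ g₂' : ℝ → ℝ} (hw : IsWeight w)
    (h₁ : MemHw w g₁ g₁') (h₂ : MemHw w g₂ g₂') :
    MemHw w (fun x => g₁ x - g₂ x) (fun x => g₁' x - g₂' x) := by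
  have h := MemHw.comb hw (-1) h₁ h₂
  simp only [neg_one_mul, ← sub_eq_add_neg] at h
  exact h

/-- the squaring map satisfies
`‖g₁² − g₂²‖_w ≤ √(5+4k²) ‖g₁+g₂‖_w ‖g₁−g₂‖_w`, `k² = ∫₀^∞ 1/w`. -/
theorem stmt7 (w : ℝ → ℝ) (hw : IsWeight w)
    (hk : IntegrableOn (fun x => 1 / w x) (Ioi 0))
    (g₁ g₁' g₂ g₂' : ℝ → ℝ) (h₁ : MemHw w g₁ g₁') (h₂ : MemHw w g₂ g₂') :
    wNorm w (fun x => g₁ x ^ 2 - g₂ x ^ 2)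
        (fun x => 2 * g₁ x * g₁' x - 2 * g₂ x * g₂' x) ≤
      Real.sqrt (5 + 4 * ∫ s in Ioi (0:ℝ), 1 / w s) *
        wNorm w (fun x => g₁ x + g₂ x) (fun x => g₁' x + g₂' x) *
        wNorm w (fun x => g₁ x - g₂ x) (fun x => g₁' x - g₂' x) := by
  set k2 := ∫ s in Ioi (0:ℝ), 1 / w s with hk2def
  have hk2 : 0 ≤ k2 := setIntegral_nonneg measurableSet_Ioi fun s hs =>
    div_nonneg zero_le_one (by linarith [hw.one_le s (mem_Ici.2 (le_of_lt hs))])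
  have hu : MemHw w (fun x => g₁ x + g₂ x) (fun x => g₁' x + g₂' x) :=
    MemHw.add' hw h₁ h₂
  have hv : MemHw w (fun x => g₁ x - g₂ x) (fun x => g₁' x - g₂' x) :=
    MemHw.sub' hw h₁ h₂
  set A := wNorm w (fun x => g₁ x + g₂ x) (fun x => g₁' x + g₂' x) with hAdef
  set Bv := wNorm w (fun x => g₁ x - g₂ x) (fun x => g₁' x - g₂' x) with hBdef
  have hA0 : 0 ≤ A := Real.sqrt_nonneg _
  have hB0 : 0 ≤ Bv := Real.sqrt_nonneg _
  have hAsq : A ^ 2 = (g₁ 0 + g₂ 0) ^ 2 + ∫ x in Ioi (0:ℝ), w x * (g₁' x + g₂' x) ^ 2 :=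
    wNorm_sq hw _ _
  have hBsq : Bv ^ 2 = (g₁ 0 - g₂ 0) ^ 2 + ∫ x in Ioi (0:ℝ), w x * (g₁' x - g₂' x) ^ 2 :=
    wNorm_sq hw _ _
  have hInn : 0 ≤ ∫ x in Ioi (0:ℝ), w x * (g₁' x + g₂' x) ^ 2 := integral_w_sq_nonneg hw
  have hInn' : 0 ≤ ∫ x in Ioi (0:ℝ), w x * (g₁' x - g₂' x) ^ 2 := integral_w_sq_nonneg hw
  have hIuA : (∫ x in Ioi (0:ℝ), w x * (g₁' x + g₂' x) ^ 2) ≤ A ^ 2 := by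
    nlinarith [sq_nonneg (g₁ 0 + g₂ 0)]
  have hIvB : (∫ x in Ioi (0:ℝ), w x * (g₁' x - g₂' x) ^ 2) ≤ Bv ^ 2 := by
    nlinarith [sq_nonneg (g₁ 0 - g₂ 0)]
  have hu0 : (g₁ 0 + g₂ 0) ^ 2 ≤ A ^ 2 := by linarith
  have hv0 : (g₁ 0 - g₂ 0) ^ 2 ≤ Bv ^ 2 := by linarith
  -- sup bounds
  have hMu : ∀ x : ℝ, 0 ≤ x → (g₁ x + g₂ x) ^ 2 ≤ (1 + k2) * A ^ 2 := by
    intro x hx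
    have h5 : |g₁ x + g₂ x| ≤ Real.sqrt (1 + k2) * A := sup_bound hw hk hu hx
    have habs : |g₁ x + g₂ x| ^ 2 ≤ (Real.sqrt (1 + k2) * A) ^ 2 :=
      pow_le_pow_left₀ (abs_nonneg _) h5 2
    rw [sq_abs, mul_pow, Real.sq_sqrt (by linarith)] at habs
    exact habs
  have hMv : ∀ x : ℝ, 0 ≤ x → (g₁ x - g₂ x) ^ 2 ≤ (1 + k2) * Bv ^ 2 := by
    intro x hx
    have h5 : |g₁ x - g₂ x| ≤ Real.sqrt (1 + k2) * Bv := sup_bound hw hk hv hx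
    have habs : |g₁ x - g₂ x| ^ 2 ≤ (Real.sqrt (1 + k2) * Bv) ^ 2 :=
      pow_le_pow_left₀ (abs_nonneg _) h5 2
    rw [sq_abs, mul_pow, Real.sq_sqrt (by linarith)] at habs
    exact habs
  -- bound for the integral term
  have hbound : (∫ x in Ioi (0:ℝ),
      w x * (2 * g₁ x * g₁' x - 2 * g₂ x * g₂' x) ^ 2)
      ≤ 4 * (1 + k2) * (A ^ 2 * Bv ^ 2) := by
    have hφ : Integrable (fun x =>
        (2 * ((1 + k2) * Bv ^ 2)) * (w x * (g₁' x + g₂' x) ^ 2)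
        + (2 * ((1 + k2) * A ^ 2)) * (w x * (g₁' x - g₂' x) ^ 2))
        (volume.restrict (Ioi 0)) := (hu.2.2.const_mul _).add (hv.2.2.const_mul _)
    have hmono := integral_mono_of_nonneg (f := fun x =>
        w x * (2 * g₁ x * g₁' x - 2 * g₂ x * g₂' x) ^ 2)
        (μ := volume.restrict (Ioi 0)) ?_ hφ ?_
    · refine hmono.trans ?_
      rw [integral_add (hu.2.2.const_mul _) (hv.2.2.const_mul _), integral_const_mul,
        integral_const_mul]
      have c1 : (0:ℝ) ≤ 2 * ((1 + k2) * Bv ^ 2) := by positivity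
      have c2 : (0:ℝ) ≤ 2 * ((1 + k2) * A ^ 2) := by positivity
      nlinarith [mul_le_mul_of_nonneg_left hIuA c1, mul_le_mul_of_nonneg_left hIvB c2]
    · filter_upwards [ae_restrict_mem measurableSet_Ioi] with s hs
      have hws : 1 ≤ w s := hw.one_le s (mem_Ici.2 (le_of_lt hs))
      exact mul_nonneg (by linarith) (sq_nonneg _)
    · filter_upwards [ae_restrict_mem measurableSet_Ioi] with s hs
      have hws : 1 ≤ w s := hw.one_le s (mem_Ici.2 (le_of_lt hs))
      have h1 := hMu s (le_of_lt hs)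
      have h2 := hMv s (le_of_lt hs)
      have q1 : (2 * g₁ s * g₁' s - 2 * g₂ s * g₂' s) ^ 2 ≤
          2 * ((g₁' s + g₂' s) ^ 2 * (g₁ s - g₂ s) ^ 2)
          + 2 * ((g₁ s + g₂ s) ^ 2 * (g₁' s - g₂' s) ^ 2) := by
        nlinarith [sq_nonneg ((g₁' s + g₂' s) * (g₁ s - g₂ s) - (g₁ s + g₂ s) * (g₁' s - g₂' s))]
      have q2 : (g₁' s + g₂' s) ^ 2 * (g₁ s - g₂ s) ^ 2 ≤
          (g₁' s + g₂' s) ^ 2 * ((1 + k2) * Bv ^ 2) :=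
        mul_le_mul_of_nonneg_left h2 (sq_nonneg _)
      have q3 : (g₁ s + g₂ s) ^ 2 * (g₁' s - g₂' s) ^ 2 ≤
          ((1 + k2) * A ^ 2) * (g₁' s - g₂' s) ^ 2 :=
        mul_le_mul_of_nonneg_right h1 (sq_nonneg _)
      have q4 : (2 * g₁ s * g₁' s - 2 * g₂ s * g₂' s) ^ 2 ≤
          2 * ((g₁' s + g₂' s) ^ 2 * ((1 + k2) * Bv ^ 2))
          + 2 * (((1 + k2) * A ^ 2) * (g₁' s - g₂' s) ^ 2) := by linarith
      have q5 := mul_le_mul_of_nonneg_left q4 (show (0:ℝ) ≤ w s by linarith)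
      calc w s * (2 * g₁ s * g₁' s - 2 * g₂ s * g₂' s) ^ 2
          ≤ w s * (2 * ((g₁' s + g₂' s) ^ 2 * ((1 + k2) * Bv ^ 2))
            + 2 * (((1 + k2) * A ^ 2) * (g₁' s - g₂' s) ^ 2)) := q5
        _ = (2 * ((1 + k2) * Bv ^ 2)) * (w s * (g₁' s + g₂' s) ^ 2)
            + (2 * ((1 + k2) * A ^ 2)) * (w s * (g₁' s - g₂' s) ^ 2) := by ring
  -- put the pieces together
  have hIeq : wInner w (fun x => g₁ x ^ 2 - g₂ x ^ 2)
      (fun x => 2 * g₁ x * g₁' x - 2 * g₂ x * g₂' x)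
      (fun x => g₁ x ^ 2 - g₂ x ^ 2)
      (fun x => 2 * g₁ x * g₁' x - 2 * g₂ x * g₂' x)
      = (g₁ 0 ^ 2 - g₂ 0 ^ 2) ^ 2
        + ∫ x in Ioi (0:ℝ), w x * (2 * g₁ x * g₁' x - 2 * g₂ x * g₂' x) ^ 2 :=
    wInner_self_eq _ _ _
  have hinner : wInner w (fun x => g₁ x ^ 2 - g₂ x ^ 2)
      (fun x => 2 * g₁ x * g₁' x - 2 * g₂ x * g₂' x)
      (fun x => g₁ x ^ 2 - g₂ x ^ 2)
      (fun x => 2 * g₁ x * g₁' x - 2 * g₂ x * g₂' x) ≤ (5 + 4 * k2) * (A * Bv) ^ 2 := by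
    rw [hIeq]
    have h00 : ((g₁ 0 + g₂ 0) ^ 2) * ((g₁ 0 - g₂ 0) ^ 2) ≤ A ^ 2 * Bv ^ 2 :=
      mul_le_mul hu0 hv0 (sq_nonneg _) (sq_nonneg _)
    nlinarith [hbound, h00]
  have h5nn : (0:ℝ) ≤ 5 + 4 * k2 := by linarith
  have hfin : wNorm w (fun x => g₁ x ^ 2 - g₂ x ^ 2)
      (fun x => 2 * g₁ x * g₁' x - 2 * g₂ x * g₂' x)
      ≤ Real.sqrt ((5 + 4 * k2) * (A * Bv) ^ 2) := by
    rw [wNorm]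
    exact Real.sqrt_le_sqrt hinner
  rw [Real.sqrt_mul h5nn, Real.sqrt_sq (mul_nonneg hA0 hB0), ← mul_assoc] at hfin
  exact hfin
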